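/- Under the permutation null, Cov(W_1(t), D_2(t)) = 0 for two symmetric kernels K_1 and K_2, where W_1(t) = (t/n)α_1(t) + ((n-t)/n)β_1(t) and D_2(t) = (t(t-1)/(n(n-1)))α_2(t) − ((n-t)(n-t-1)/(n(n-1)))β_2(t). -/

import Mathlib

open Finset

/-- Expectation under the uniform permutation null distribution. -/
noncomputable def permExp (n : ℕ) (f : Equiv.Perm (Fin n) → ℝ) : ℝ :=
  (∑ π : Equiv.Perm (Fin n), f π) / (Fintype.card (Equiv.Perm (Fin n)) : ℝ)

/-- Within-segment ordered-pair kernel average. -/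
noncomputable def alphaStat (n t : ℕ) (K : Fin n → Fin n → ℝ)
    (π : Equiv.Perm (Fin n)) : ℝ :=
  (1 / ((t : ℝ) * ((t : ℝ) - 1))) *
    ∑ i : Fin n, ∑ j : Fin n,
      if i ≠ j ∧ (i : ℕ) < t ∧ (j : ℕ) < t then K (π i) (π j) else 0

/-- After-segment ordered-pair kernel average. -/
noncomputable def betaStat (n t : ℕ) (K : Fin n → Fin n → ℝ)
    (π : Equiv.Perm (Fin n)) : ℝ :=
  (1 / (((n : ℝ) - t) * ((n : ℝ) - t - 1))) *
    ∑ i : Fin n, ∑ j : Fin n,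
      if i ≠ j ∧ t ≤ (i : ℕ) ∧ t ≤ (j : ℕ) then K (π i) (π j) else 0

/-- The statistic `W(t)`. -/
noncomputable def Wstat (n t : ℕ) (K : Fin n → Fin n → ℝ)
    (π : Equiv.Perm (Fin n)) : ℝ :=
  ((t : ℝ) / n) * alphaStat n t K π + (((n : ℝ) - t) / n) * betaStat n t K π

/-- The statistic `D(t)`. -/
noncomputable def Dstat (n t : ℕ) (K : Fin n → Fin n → ℝ)
    (π : Equiv.Perm (Fin n)) : ℝ :=
  (((t : ℝ) * ((t : ℝ) - 1)) / ((n : ℝ) * ((n : ℝ) - 1))) * alphaStat n t K π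
    - ((((n : ℝ) - t) * ((n : ℝ) - t - 1)) / ((n : ℝ) * ((n : ℝ) - 1)))
        * betaStat n t K π


namespace CovAux

variable {n : ℕ}


lemma exists_perm_map {α : Type*} [Fintype α] [DecidableEq α] {m : ℕ}
    (f g : Fin m → α) (hf : Function.Injective f) (hg : Function.Injective g) :
    ∃ σ : Equiv.Perm α, ∀ i, σ (f i) = g i := by
  classical
  have h1 : Fintype.card {x // x ∈ Set.range f} = m := by
    have := Fintype.card_congr (Equiv.ofInjective f hf)
    rw [Fintype.card_fin] at this
    exact this.symm
  have h2 : Fintype.card {x // x ∈ Set.range g} = m := by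
    have := Fintype.card_congr (Equiv.ofInjective g hg)
    rw [Fintype.card_fin] at this
    exact this.symm
  have hcard : Fintype.card {x // ¬ x ∈ Set.range f} = Fintype.card {x // ¬ x ∈ Set.range g} := by
    rw [Fintype.card_subtype_compl, Fintype.card_subtype_compl, h1, h2]
  let e₁ : {x // x ∈ Set.range f} ≃ {x // x ∈ Set.range g} :=
    (Equiv.ofInjective f hf).symm.trans (Equiv.ofInjective g hg)
  let e₂ : {x // ¬ x ∈ Set.range f} ≃ {x // ¬ x ∈ Set.range g} := Fintype.equivOfCardEq hcard
  refine ⟨Equiv.subtypeCongr e₁ e₂, fun i => ?_⟩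
  have hm : f i ∈ Set.range f := ⟨i, rfl⟩
  simp only [Equiv.subtypeCongr, Equiv.trans_apply, Equiv.sumCompl_symm_apply_of_pos hm,
    Equiv.sumCongr_apply, Sum.map_inl, Equiv.sumCompl_apply_inl]
  show ((e₁ ⟨f i, hm⟩ : {x // x ∈ Set.range g}) : α) = g i
  have : e₁ ⟨f i, hm⟩ = Equiv.ofInjective g hg i := by
    simp only [e₁, Equiv.trans_apply]
    congr 1
    exact (Equiv.symm_apply_eq _).mpr rfl
  rw [this]
  rfl



noncomputable def Gq (K₁ K₂ : Fin n → Fin n → ℝ) (i j k l : Fin n) : ℝ :=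
  ∑ π : Equiv.Perm (Fin n), K₁ (π i) (π j) * K₂ (π k) (π l)

noncomputable def G1 (K : Fin n → Fin n → ℝ) (i j : Fin n) : ℝ :=
  ∑ π : Equiv.Perm (Fin n), K (π i) (π j)

lemma Gq_perm (K₁ K₂ : Fin n → Fin n → ℝ) (σ : Equiv.Perm (Fin n)) (i j k l : Fin n) :
    Gq K₁ K₂ (σ i) (σ j) (σ k) (σ l) = Gq K₁ K₂ i j k l :=
  Fintype.sum_equiv (Equiv.mulRight σ) _ _ (fun π => rfl)

lemma G1_perm (K : Fin n → Fin n → ℝ) (σ : Equiv.Perm (Fin n)) (i j : Fin n) :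
    G1 K (σ i) (σ j) = G1 K i j :=
  Fintype.sum_equiv (Equiv.mulRight σ) _ _ (fun π => rfl)

lemma inj2 {α : Type*} {a b : α} (h : a ≠ b) : Function.Injective ![a, b] := by
  intro x y hxy
  fin_cases x <;> fin_cases y <;> simp_all

lemma inj3 {α : Type*} {a b c : α} (hab : a ≠ b) (hac : a ≠ c) (hbc : b ≠ c) :
    Function.Injective ![a, b, c] := by
  intro x y hxy
  fin_cases x <;> fin_cases y <;> simp_all

lemma inj4 {α : Type*} {a b c d : α} (hab : a ≠ b) (hac : a ≠ c) (had : a ≠ d)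
    (hbc : b ≠ c) (hbd : b ≠ d) (hcd : c ≠ d) :
    Function.Injective ![a, b, c, d] := by
  intro x y hxy
  fin_cases x <;> fin_cases y <;> simp_all

lemma G1_pat {K : Fin n → Fin n → ℝ} {y0 y1 i j : Fin n} (hy : y0 ≠ y1) (h : i ≠ j) :
    G1 K i j = G1 K y0 y1 := by
  obtain ⟨σ, hσ⟩ := exists_perm_map ![y0, y1] ![i, j] (inj2 hy) (inj2 h)
  have h0 : σ y0 = i := hσ 0
  have h1 : σ y1 = j := hσ 1
  have := G1_perm K σ y0 y1
  rw [h0, h1] at this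
  exact this

lemma Gq_pat2 {K₁ K₂ : Fin n → Fin n → ℝ} {y0 y1 i j : Fin n} (hy : y0 ≠ y1) (h : i ≠ j) :
    Gq K₁ K₂ i j i j = Gq K₁ K₂ y0 y1 y0 y1 := by
  obtain ⟨σ, hσ⟩ := exists_perm_map ![y0, y1] ![i, j] (inj2 hy) (inj2 h)
  have h0 : σ y0 = i := hσ 0
  have h1 : σ y1 = j := hσ 1
  have := Gq_perm K₁ K₂ σ y0 y1 y0 y1
  rw [h0, h1] at this
  exact this

lemma Gq_pat3 {K₁ K₂ : Fin n → Fin n → ℝ} {y0 y1 y2 i j l : Fin n}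
    (hy01 : y0 ≠ y1) (hy02 : y0 ≠ y2) (hy12 : y1 ≠ y2)
    (hij : i ≠ j) (hil : i ≠ l) (hjl : j ≠ l) :
    Gq K₁ K₂ i j i l = Gq K₁ K₂ y0 y1 y0 y2 := by
  obtain ⟨σ, hσ⟩ := exists_perm_map ![y0, y1, y2] ![i, j, l] (inj3 hy01 hy02 hy12)
    (inj3 hij hil hjl)
  have h0 : σ y0 = i := hσ 0
  have h1 : σ y1 = j := hσ 1
  have h2 : σ y2 = l := hσ 2
  have := Gq_perm K₁ K₂ σ y0 y1 y0 y2
  rw [h0, h1, h2] at this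
  exact this

lemma Gq_pat4 {K₁ K₂ : Fin n → Fin n → ℝ} {y0 y1 y2 y3 i j k l : Fin n}
    (hy01 : y0 ≠ y1) (hy02 : y0 ≠ y2) (hy03 : y0 ≠ y3)
    (hy12 : y1 ≠ y2) (hy13 : y1 ≠ y3) (hy23 : y2 ≠ y3)
    (hij : i ≠ j) (hik : i ≠ k) (hil : i ≠ l)
    (hjk : j ≠ k) (hjl : j ≠ l) (hkl : k ≠ l) :
    Gq K₁ K₂ i j k l = Gq K₁ K₂ y0 y1 y2 y3 := by
  obtain ⟨σ, hσ⟩ := exists_perm_map ![y0, y1, y2, y3] ![i, j, k, l]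
    (inj4 hy01 hy02 hy03 hy12 hy13 hy23) (inj4 hij hik hil hjk hjl hkl)
  have h0 : σ y0 = i := hσ 0
  have h1 : σ y1 = j := hσ 1
  have h2 : σ y2 = k := hσ 2
  have h3 : σ y3 = l := hσ 3
  have := Gq_perm K₁ K₂ σ y0 y1 y2 y3
  rw [h0, h1, h2, h3] at this
  exact this

lemma Gq_swap₁ {K₁ K₂ : Fin n → Fin n → ℝ} (hs : ∀ a b, K₁ a b = K₁ b a) (i j k l : Fin n) :
    Gq K₁ K₂ i j k l = Gq K₁ K₂ j i k l :=
  Finset.sum_congr rfl fun π _ => by rw [hs]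

lemma Gq_swap₂ {K₁ K₂ : Fin n → Fin n → ℝ} (hs : ∀ a b, K₂ a b = K₂ b a) (i j k l : Fin n) :
    Gq K₁ K₂ i j k l = Gq K₁ K₂ i j l k :=
  Finset.sum_congr rfl fun π _ => by rw [hs]

lemma Gq_diag₁ {K₁ K₂ : Fin n → Fin n → ℝ} (hd : ∀ a, K₁ a a = 0) (i k l : Fin n) :
    Gq K₁ K₂ i i k l = 0 :=
  Finset.sum_eq_zero fun π _ => by rw [hd]; ring

lemma Gq_diag₂ {K₁ K₂ : Fin n → Fin n → ℝ} (hd : ∀ a, K₂ a a = 0) (i j k : Fin n) :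
    Gq K₁ K₂ i j k k = 0 :=
  Finset.sum_eq_zero fun π _ => by rw [hd]; ring

lemma G1_diag {K : Fin n → Fin n → ℝ} (hd : ∀ a, K a a = 0) (i : Fin n) :
    G1 K i i = 0 :=
  Finset.sum_eq_zero fun π _ => hd _



lemma pair_sum {K : Fin n → Fin n → ℝ} (hd : ∀ a, K a a = 0)
    {y0 y1 : Fin n} (hy : y0 ≠ y1) (S : Finset (Fin n)) :
    ∑ i ∈ S, ∑ j ∈ S, G1 K i j
      = (S.card : ℝ) * ((S.card : ℝ) - 1) * G1 K y0 y1 := by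
  calc ∑ i ∈ S, ∑ j ∈ S, G1 K i j
      = ∑ i ∈ S, ((S.card : ℝ) - 1) * G1 K y0 y1 := by
        refine Finset.sum_congr rfl fun i hi => ?_
        have h1 : 1 ≤ S.card := Finset.card_pos.mpr ⟨i, hi⟩
        calc ∑ j ∈ S, G1 K i j = ∑ j ∈ S.erase i, G1 K i j :=
              (Finset.sum_erase S (G1_diag hd i)).symm
          _ = ∑ _j ∈ S.erase i, G1 K y0 y1 := by
              refine Finset.sum_congr rfl fun j hj => ?_
              exact G1_pat hy (Ne.symm (Finset.mem_erase.mp hj).1)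
          _ = ((S.card : ℝ) - 1) * G1 K y0 y1 := by
              rw [Finset.sum_const, Finset.card_erase_of_mem hi, nsmul_eq_mul,
                Nat.cast_sub h1, Nat.cast_one]
    _ = (S.card : ℝ) * ((S.card : ℝ) - 1) * G1 K y0 y1 := by
        rw [Finset.sum_const, nsmul_eq_mul]; ring

lemma master_sum {K₁ K₂ : Fin n → Fin n → ℝ}
    (hs₁ : ∀ a b, K₁ a b = K₁ b a) (hd₁ : ∀ a, K₁ a a = 0)
    (hs₂ : ∀ a b, K₂ a b = K₂ b a) (hd₂ : ∀ a, K₂ a a = 0)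
    {y0 y1 y2 y3 : Fin n} (h01 : y0 ≠ y1) (h02 : y0 ≠ y2) (h03 : y0 ≠ y3)
    (h12 : y1 ≠ y2) (h13 : y1 ≠ y3) (h23 : y2 ≠ y3) (S : Finset (Fin n)) :
    ∑ i ∈ S, ∑ j ∈ S, ∑ k ∈ S, ∑ l ∈ S, Gq K₁ K₂ i j k l
      = (S.card : ℝ) * ((S.card : ℝ) - 1) *
          (2 * Gq K₁ K₂ y0 y1 y0 y1
            + 4 * ((S.card : ℝ) - 2) * Gq K₁ K₂ y0 y1 y0 y2
            + ((S.card : ℝ) - 2) * ((S.card : ℝ) - 3) * Gq K₁ K₂ y0 y1 y2 y3) := by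
  set c2 := Gq K₁ K₂ y0 y1 y0 y1 with hc2
  set c3 := Gq K₁ K₂ y0 y1 y0 y2 with hc3
  set c4 := Gq K₁ K₂ y0 y1 y2 y3 with hc4
  set m := (S.card : ℝ) with hmdef
  have key : ∀ i ∈ S, ∀ j ∈ S, i ≠ j →
      ∑ k ∈ S, ∑ l ∈ S, Gq K₁ K₂ i j k l
        = 2 * c2 + 4 * (m - 2) * c3 + (m - 2) * (m - 3) * c4 := by
    intro i hi j hj hij
    have h2 : 2 ≤ S.card := Finset.one_lt_card.mpr ⟨i, hi, j, hj, hij⟩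
    have hm2 : ((S.card - 2 : ℕ) : ℝ) = m - 2 := by
      rw [Nat.cast_sub h2]; norm_num; exact hmdef.symm
    have hjm : j ∈ S.erase i := Finset.mem_erase.mpr ⟨Ne.symm hij, hj⟩
    have him : i ∈ S.erase j := Finset.mem_erase.mpr ⟨hij, hi⟩
    have hcardij : ((S.erase i).erase j).card = S.card - 2 := by
      rw [Finset.card_erase_of_mem hjm, Finset.card_erase_of_mem hi]
      omega
    have hcardji : ((S.erase j).erase i).card = S.card - 2 := by
      rw [Finset.card_erase_of_mem him, Finset.card_erase_of_mem hj]
      omega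
    have gi : ∑ l ∈ S.erase i, Gq K₁ K₂ i j i l = c2 + (m - 2) * c3 := by
      rw [← Finset.sum_erase_add (S.erase i) _ hjm]
      have e1 : ∑ l ∈ (S.erase i).erase j, Gq K₁ K₂ i j i l = (m - 2) * c3 := by
        calc ∑ l ∈ (S.erase i).erase j, Gq K₁ K₂ i j i l
            = ∑ _l ∈ (S.erase i).erase j, c3 := by
              refine Finset.sum_congr rfl fun l hl => ?_
              obtain ⟨hlj, hli, _⟩ : l ≠ j ∧ l ≠ i ∧ l ∈ S := by
                have a1 := Finset.mem_erase.mp hl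
                have a2 := Finset.mem_erase.mp a1.2
                exact ⟨a1.1, a2.1, a2.2⟩
              exact Gq_pat3 h01 h02 h12 hij (Ne.symm hli) (Ne.symm hlj)
          _ = (m - 2) * c3 := by
              rw [Finset.sum_const, hcardij, nsmul_eq_mul, hm2]
      rw [e1, Gq_pat2 h01 hij]
      ring
    have gj : ∑ l ∈ S.erase j, Gq K₁ K₂ i j j l = c2 + (m - 2) * c3 := by
      rw [← Finset.sum_erase_add (S.erase j) _ him]
      have e1 : ∑ l ∈ (S.erase j).erase i, Gq K₁ K₂ i j j l = (m - 2) * c3 := by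
        calc ∑ l ∈ (S.erase j).erase i, Gq K₁ K₂ i j j l
            = ∑ _l ∈ (S.erase j).erase i, c3 := by
              refine Finset.sum_congr rfl fun l hl => ?_
              obtain ⟨hli, hlj, _⟩ : l ≠ i ∧ l ≠ j ∧ l ∈ S := by
                have a1 := Finset.mem_erase.mp hl
                have a2 := Finset.mem_erase.mp a1.2
                exact ⟨a1.1, a2.1, a2.2⟩
              rw [Gq_swap₁ hs₁]
              exact Gq_pat3 h01 h02 h12 (Ne.symm hij) (Ne.symm hlj) (Ne.symm hli)
          _ = (m - 2) * c3 := by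
              rw [Finset.sum_const, hcardji, nsmul_eq_mul, hm2]
      have e2 : Gq K₁ K₂ i j j i = c2 := by
        rw [Gq_swap₂ hs₂]
        exact Gq_pat2 h01 hij
      rw [e1, e2]
      ring
    have gk : ∀ k ∈ (S.erase i).erase j,
        ∑ l ∈ S.erase k, Gq K₁ K₂ i j k l = 2 * c3 + (m - 3) * c4 := by
      intro k hk
      obtain ⟨hkj, hki, hkS⟩ : k ≠ j ∧ k ≠ i ∧ k ∈ S := by
        have a1 := Finset.mem_erase.mp hk
        have a2 := Finset.mem_erase.mp a1.2
        exact ⟨a1.1, a2.1, a2.2⟩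
      have h3 : 3 ≤ S.card := by
        have hpos : 0 < ((S.erase i).erase j).card := Finset.card_pos.mpr ⟨k, hk⟩
        omega
      have hm3 : ((S.card - 3 : ℕ) : ℝ) = m - 3 := by
        rw [Nat.cast_sub h3]; norm_num; exact hmdef.symm
      have him2 : i ∈ S.erase k := Finset.mem_erase.mpr ⟨Ne.symm hki, hi⟩
      have hjm2 : j ∈ (S.erase k).erase i :=
        Finset.mem_erase.mpr ⟨Ne.symm hij, Finset.mem_erase.mpr ⟨Ne.symm hkj, hj⟩⟩
      have hcard3 : (((S.erase k).erase i).erase j).card = S.card - 3 := by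
        rw [Finset.card_erase_of_mem hjm2, Finset.card_erase_of_mem him2,
          Finset.card_erase_of_mem hkS]
        omega
      rw [← Finset.sum_erase_add (S.erase k) _ him2,
        ← Finset.sum_erase_add ((S.erase k).erase i) _ hjm2]
      have e1 : ∑ l ∈ ((S.erase k).erase i).erase j, Gq K₁ K₂ i j k l = (m - 3) * c4 := by
        calc ∑ l ∈ ((S.erase k).erase i).erase j, Gq K₁ K₂ i j k l
            = ∑ _l ∈ ((S.erase k).erase i).erase j, c4 := by
              refine Finset.sum_congr rfl fun l hl => ?_
              obtain ⟨hlj, hli, hlk, _⟩ : l ≠ j ∧ l ≠ i ∧ l ≠ k ∧ l ∈ S := by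
                have a1 := Finset.mem_erase.mp hl
                have a2 := Finset.mem_erase.mp a1.2
                have a3 := Finset.mem_erase.mp a2.2
                exact ⟨a1.1, a2.1, a3.1, a3.2⟩
              exact Gq_pat4 h01 h02 h03 h12 h13 h23 hij (Ne.symm hki) (Ne.symm hli)
                (Ne.symm hkj) (Ne.symm hlj) (Ne.symm hlk)
          _ = (m - 3) * c4 := by
              rw [Finset.sum_const, hcard3, nsmul_eq_mul, hm3]
      have e2 : Gq K₁ K₂ i j k j = c3 := by
        rw [Gq_swap₂ hs₂, Gq_swap₁ hs₁]
        exact Gq_pat3 h01 h02 h12 (Ne.symm hij) (Ne.symm hkj) (Ne.symm hki)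
      have e3 : Gq K₁ K₂ i j k i = c3 := by
        rw [Gq_swap₂ hs₂]
        exact Gq_pat3 h01 h02 h12 hij (Ne.symm hki) (Ne.symm hkj)
      rw [e1, e2, e3]
      ring
    calc ∑ k ∈ S, ∑ l ∈ S, Gq K₁ K₂ i j k l
        = ∑ k ∈ S, ∑ l ∈ S.erase k, Gq K₁ K₂ i j k l := by
          refine Finset.sum_congr rfl fun k _ => ?_
          exact (Finset.sum_erase S (Gq_diag₂ hd₂ i j k)).symm
      _ = (∑ k ∈ (S.erase i).erase j, ∑ l ∈ S.erase k, Gq K₁ K₂ i j k l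
            + ∑ l ∈ S.erase j, Gq K₁ K₂ i j j l)
            + ∑ l ∈ S.erase i, Gq K₁ K₂ i j i l := by
          rw [← Finset.sum_erase_add S _ hi, ← Finset.sum_erase_add (S.erase i) _ hjm]
      _ = (∑ _k ∈ (S.erase i).erase j, (2 * c3 + (m - 3) * c4)
            + (c2 + (m - 2) * c3)) + (c2 + (m - 2) * c3) := by
          rw [gi, gj, Finset.sum_congr rfl gk]
      _ = 2 * c2 + 4 * (m - 2) * c3 + (m - 2) * (m - 3) * c4 := by
          rw [Finset.sum_const, hcardij, nsmul_eq_mul, hm2]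
          ring
  calc ∑ i ∈ S, ∑ j ∈ S, ∑ k ∈ S, ∑ l ∈ S, Gq K₁ K₂ i j k l
      = ∑ i ∈ S, ∑ j ∈ S.erase i, ∑ k ∈ S, ∑ l ∈ S, Gq K₁ K₂ i j k l := by
        refine Finset.sum_congr rfl fun i hi => ?_
        refine (Finset.sum_erase S ?_).symm
        exact Finset.sum_eq_zero fun k _ => Finset.sum_eq_zero fun l _ => Gq_diag₁ hd₁ i k l
    _ = ∑ i ∈ S, ∑ _j ∈ S.erase i, (2 * c2 + 4 * (m - 2) * c3 + (m - 2) * (m - 3) * c4) := by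
        refine Finset.sum_congr rfl fun i hi => Finset.sum_congr rfl fun j hj => ?_
        exact key i hi j (Finset.mem_erase.mp hj).2 (Ne.symm (Finset.mem_erase.mp hj).1)
    _ = ∑ i ∈ S, (m - 1) * (2 * c2 + 4 * (m - 2) * c3 + (m - 2) * (m - 3) * c4) := by
        refine Finset.sum_congr rfl fun i hi => ?_
        have h1 : 1 ≤ S.card := Finset.card_pos.mpr ⟨i, hi⟩
        rw [Finset.sum_const, Finset.card_erase_of_mem hi, nsmul_eq_mul,
          Nat.cast_sub h1, Nat.cast_one]
    _ = m * ((m - 1) * (2 * c2 + 4 * (m - 2) * c3 + (m - 2) * (m - 3) * c4)) := by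
        rw [Finset.sum_const, nsmul_eq_mul]
    _ = m * (m - 1) * (2 * c2 + 4 * (m - 2) * c3 + (m - 2) * (m - 3) * c4) := by ring

lemma cross_sum {K₁ K₂ : Fin n → Fin n → ℝ}
    (hd₁ : ∀ a, K₁ a a = 0) (hd₂ : ∀ a, K₂ a a = 0)
    {y0 y1 y2 y3 : Fin n} (h01 : y0 ≠ y1) (h02 : y0 ≠ y2) (h03 : y0 ≠ y3)
    (h12 : y1 ≠ y2) (h13 : y1 ≠ y3) (h23 : y2 ≠ y3)
    {S T : Finset (Fin n)} (hST : Disjoint S T) :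
    ∑ i ∈ S, ∑ j ∈ S, ∑ k ∈ T, ∑ l ∈ T, Gq K₁ K₂ i j k l
      = (S.card : ℝ) * ((S.card : ℝ) - 1) * ((T.card : ℝ) * ((T.card : ℝ) - 1))
          * Gq K₁ K₂ y0 y1 y2 y3 := by
  set c4 := Gq K₁ K₂ y0 y1 y2 y3 with hc4
  have key : ∀ i ∈ S, ∀ j ∈ S, i ≠ j →
      ∑ k ∈ T, ∑ l ∈ T, Gq K₁ K₂ i j k l
        = (T.card : ℝ) * ((T.card : ℝ) - 1) * c4 := by
    intro i hi j hj hij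
    calc ∑ k ∈ T, ∑ l ∈ T, Gq K₁ K₂ i j k l
        = ∑ k ∈ T, ∑ l ∈ T.erase k, Gq K₁ K₂ i j k l := by
          refine Finset.sum_congr rfl fun k _ => ?_
          exact (Finset.sum_erase T (Gq_diag₂ hd₂ i j k)).symm
      _ = ∑ k ∈ T, ((T.card : ℝ) - 1) * c4 := by
          refine Finset.sum_congr rfl fun k hk => ?_
          have h1 : 1 ≤ T.card := Finset.card_pos.mpr ⟨k, hk⟩
          calc ∑ l ∈ T.erase k, Gq K₁ K₂ i j k l
              = ∑ _l ∈ T.erase k, c4 := by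
                refine Finset.sum_congr rfl fun l hl => ?_
                have hlk : l ≠ k := (Finset.mem_erase.mp hl).1
                have hlT : l ∈ T := (Finset.mem_erase.mp hl).2
                have hik : i ≠ k := fun h => (Finset.disjoint_left.mp hST hi) (h ▸ hk)
                have hil : i ≠ l := fun h => (Finset.disjoint_left.mp hST hi) (h ▸ hlT)
                have hjk : j ≠ k := fun h => (Finset.disjoint_left.mp hST hj) (h ▸ hk)
                have hjl : j ≠ l := fun h => (Finset.disjoint_left.mp hST hj) (h ▸ hlT)
                exact Gq_pat4 h01 h02 h03 h12 h13 h23 hij hik hil hjk hjl (Ne.symm hlk)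
            _ = ((T.card : ℝ) - 1) * c4 := by
                rw [Finset.sum_const, Finset.card_erase_of_mem hk, nsmul_eq_mul,
                  Nat.cast_sub h1, Nat.cast_one]
      _ = (T.card : ℝ) * ((T.card : ℝ) - 1) * c4 := by
          rw [Finset.sum_const, nsmul_eq_mul]; ring
  calc ∑ i ∈ S, ∑ j ∈ S, ∑ k ∈ T, ∑ l ∈ T, Gq K₁ K₂ i j k l
      = ∑ i ∈ S, ∑ j ∈ S.erase i, ∑ k ∈ T, ∑ l ∈ T, Gq K₁ K₂ i j k l := by
        refine Finset.sum_congr rfl fun i hi => ?_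
        refine (Finset.sum_erase S ?_).symm
        exact Finset.sum_eq_zero fun k _ => Finset.sum_eq_zero fun l _ => Gq_diag₁ hd₁ i k l
    _ = ∑ i ∈ S, ∑ _j ∈ S.erase i, (T.card : ℝ) * ((T.card : ℝ) - 1) * c4 := by
        refine Finset.sum_congr rfl fun i hi => Finset.sum_congr rfl fun j hj => ?_
        exact key i hi j (Finset.mem_erase.mp hj).2 (Ne.symm (Finset.mem_erase.mp hj).1)
    _ = ∑ i ∈ S, ((S.card : ℝ) - 1) * ((T.card : ℝ) * ((T.card : ℝ) - 1) * c4) := by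
        refine Finset.sum_congr rfl fun i hi => ?_
        have h1 : 1 ≤ S.card := Finset.card_pos.mpr ⟨i, hi⟩
        rw [Finset.sum_const, Finset.card_erase_of_mem hi, nsmul_eq_mul,
          Nat.cast_sub h1, Nat.cast_one]
    _ = (S.card : ℝ) * ((S.card : ℝ) - 1) * ((T.card : ℝ) * ((T.card : ℝ) - 1)) * c4 := by
        rw [Finset.sum_const, nsmul_eq_mul]; ring

noncomputable def Ssum (S : Finset (Fin n)) (K : Fin n → Fin n → ℝ)
    (π : Equiv.Perm (Fin n)) : ℝ :=
  ∑ i ∈ S, ∑ j ∈ S, K (π i) (π j)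

lemma swapPerm2 (S : Finset (Fin n)) (K : Fin n → Fin n → ℝ) :
    ∑ π : Equiv.Perm (Fin n), Ssum S K π = ∑ i ∈ S, ∑ j ∈ S, G1 K i j := by
  unfold Ssum G1
  rw [Finset.sum_comm]
  exact Finset.sum_congr rfl fun i _ => Finset.sum_comm

lemma swapPerm4 (S T : Finset (Fin n)) (K₁ K₂ : Fin n → Fin n → ℝ) :
    ∑ π : Equiv.Perm (Fin n), Ssum S K₁ π * Ssum T K₂ π
      = ∑ i ∈ S, ∑ j ∈ S, ∑ k ∈ T, ∑ l ∈ T, Gq K₁ K₂ i j k l := by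
  have h1 : ∀ π : Equiv.Perm (Fin n), Ssum S K₁ π * Ssum T K₂ π
      = ∑ i ∈ S, ∑ j ∈ S, ∑ k ∈ T, ∑ l ∈ T, K₁ (π i) (π j) * K₂ (π k) (π l) := by
    intro π
    unfold Ssum
    rw [Finset.sum_mul_sum]
    refine Finset.sum_congr rfl fun i _ => ?_
    rw [Finset.sum_congr rfl fun k (_ : k ∈ T) => Finset.sum_mul_sum S T
      (fun j => K₁ (π i) (π j)) (fun l => K₂ (π k) (π l))]
    exact Finset.sum_comm
  rw [Finset.sum_congr rfl fun π _ => h1 π]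
  rw [Finset.sum_comm]
  refine Finset.sum_congr rfl fun i _ => ?_
  rw [Finset.sum_comm]
  refine Finset.sum_congr rfl fun j _ => ?_
  rw [Finset.sum_comm]
  refine Finset.sum_congr rfl fun k _ => ?_
  exact Finset.sum_comm

lemma Ssum_univ_const (K : Fin n → Fin n → ℝ) (π : Equiv.Perm (Fin n)) :
    Ssum Finset.univ K π = ∑ a : Fin n, ∑ b : Fin n, K a b := by
  unfold Ssum
  calc ∑ i : Fin n, ∑ j : Fin n, K (π i) (π j)
      = ∑ i : Fin n, ∑ b : Fin n, K (π i) b :=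
        Finset.sum_congr rfl fun i _ => Equiv.sum_comp π (K (π i))
    _ = ∑ a : Fin n, ∑ b : Fin n, K a b := Equiv.sum_comp π (fun a => ∑ b : Fin n, K a b)

lemma alpha_eq (t : ℕ) (K : Fin n → Fin n → ℝ) (hd : ∀ a, K a a = 0)
    (π : Equiv.Perm (Fin n)) :
    (∑ i : Fin n, ∑ j : Fin n,
        if i ≠ j ∧ (i : ℕ) < t ∧ (j : ℕ) < t then K (π i) (π j) else 0)
      = Ssum (Finset.univ.filter fun i : Fin n => (i : ℕ) < t) K π := by
  have hpt : ∀ i j : Fin n, (if i ≠ j ∧ (i : ℕ) < t ∧ (j : ℕ) < t then K (π i) (π j) else 0)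
      = (if (i : ℕ) < t then (if (j : ℕ) < t then K (π i) (π j) else 0) else 0) := by
    intro i j
    by_cases hij : i = j
    · subst hij
      simp [hd (π i)]
    · simp [hij, ite_and]
  simp only [hpt]
  unfold Ssum
  have h2 : ∀ i : Fin n, (∑ j : Fin n, if (i : ℕ) < t then (if (j : ℕ) < t then K (π i) (π j) else 0) else 0)
      = (if (i : ℕ) < t then ∑ j : Fin n, (if (j : ℕ) < t then K (π i) (π j) else 0) else 0) := by
    intro i
    split_ifs with h
    · rfl
    · simp
  rw [Finset.sum_congr rfl fun i _ => h2 i, ← Finset.sum_filter]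
  refine Finset.sum_congr rfl fun i _ => ?_
  rw [← Finset.sum_filter]

lemma beta_eq (t : ℕ) (K : Fin n → Fin n → ℝ) (hd : ∀ a, K a a = 0)
    (π : Equiv.Perm (Fin n)) :
    (∑ i : Fin n, ∑ j : Fin n,
        if i ≠ j ∧ t ≤ (i : ℕ) ∧ t ≤ (j : ℕ) then K (π i) (π j) else 0)
      = Ssum (Finset.univ.filter fun i : Fin n => t ≤ (i : ℕ)) K π := by
  have hpt : ∀ i j : Fin n, (if i ≠ j ∧ t ≤ (i : ℕ) ∧ t ≤ (j : ℕ) then K (π i) (π j) else 0)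
      = (if t ≤ (i : ℕ) then (if t ≤ (j : ℕ) then K (π i) (π j) else 0) else 0) := by
    intro i j
    by_cases hij : i = j
    · subst hij
      simp [hd (π i)]
    · simp [hij, ite_and]
  simp only [hpt]
  unfold Ssum
  have h2 : ∀ i : Fin n, (∑ j : Fin n, if t ≤ (i : ℕ) then (if t ≤ (j : ℕ) then K (π i) (π j) else 0) else 0)
      = (if t ≤ (i : ℕ) then ∑ j : Fin n, (if t ≤ (j : ℕ) then K (π i) (π j) else 0) else 0) := by
    intro i
    split_ifs with h
    · rfl
    · simp
  rw [Finset.sum_congr rfl fun i _ => h2 i, ← Finset.sum_filter]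
  refine Finset.sum_congr rfl fun i _ => ?_
  rw [← Finset.sum_filter]

lemma cardA {t : ℕ} (htn : t ≤ n) :
    (Finset.univ.filter fun i : Fin n => (i : ℕ) < t).card = t := by
  have : (Finset.univ.filter fun i : Fin n => (i : ℕ) < t)
      = (Finset.range t).attachFin (fun m hm => lt_of_lt_of_le (Finset.mem_range.mp hm) htn) := by
    ext a
    simp [Finset.mem_attachFin]
  rw [this, Finset.card_attachFin, Finset.card_range]

lemma cardB {t : ℕ} (htn : t ≤ n) :
    (Finset.univ.filter fun i : Fin n => t ≤ (i : ℕ)).card = n - t := by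
  have hcompl : (Finset.univ.filter fun i : Fin n => t ≤ (i : ℕ))
      = (Finset.univ.filter fun i : Fin n => (i : ℕ) < t)ᶜ := by
    ext a
    simp [not_lt]
  rw [hcompl, Finset.card_compl, cardA htn, Fintype.card_fin]

lemma disjAB (t : ℕ) :
    Disjoint (Finset.univ.filter fun i : Fin n => (i : ℕ) < t)
      (Finset.univ.filter fun i : Fin n => t ≤ (i : ℕ)) := by
  rw [Finset.disjoint_left]
  intro a ha hb
  simp only [Finset.mem_filter] at ha hb
  omega


end CovAux

set_option maxHeartbeats 1000000 in
lemma final_alg (M τ ν c1a c1b c2 c3 c4 : ℝ)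
    (hM : M ≠ 0) (ht0 : τ ≠ 0) (ht1 : τ - 1 ≠ 0) (hn0 : ν ≠ 0) (hn1 : ν - 1 ≠ 0)
    (hs0 : ν - τ ≠ 0) (hs1 : ν - τ - 1 ≠ 0)
    (R : M * (ν * (ν - 1) * (2*c2 + 4*(ν-2)*c3 + (ν-2)*(ν-3)*c4))
        = ν*(ν-1)*c1a * (ν*(ν-1)*c1b)) :
    ((1/(ν*(τ-1)*(ν*(ν-1)))) *
        (τ*(τ-1) * (2*c2 + 4*(τ-2)*c3 + (τ-2)*(τ-3)*c4))
     - (1/(ν*(τ-1)*(ν*(ν-1)))) *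
        (τ*(τ-1) * ((ν-τ)*((ν-τ)-1)) * c4)
     + (1/(ν*((ν-τ)-1)*(ν*(ν-1)))) *
        ((ν-τ)*((ν-τ)-1) * (τ*(τ-1)) * c4)
     - (1/(ν*((ν-τ)-1)*(ν*(ν-1)))) *
        ((ν-τ)*((ν-τ)-1) * (2*c2 + 4*((ν-τ)-2)*c3 + ((ν-τ)-2)*((ν-τ)-3)*c4))) / M
    - ((1/(ν*(τ-1))) * (τ*(τ-1)*c1a) + (1/(ν*((ν-τ)-1))) * ((ν-τ)*((ν-τ)-1)*c1a)) / M
      * (((1/(ν*(ν-1))) * (τ*(τ-1)*c1b)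
          - (1/(ν*(ν-1))) * ((ν-τ)*((ν-τ)-1)*c1b)) / M) = 0 := by
  have hX : ((1/(ν*(τ-1)*(ν*(ν-1)))) *
        (τ*(τ-1) * (2*c2 + 4*(τ-2)*c3 + (τ-2)*(τ-3)*c4))
     - (1/(ν*(τ-1)*(ν*(ν-1)))) *
        (τ*(τ-1) * ((ν-τ)*((ν-τ)-1)) * c4)
     + (1/(ν*((ν-τ)-1)*(ν*(ν-1)))) *
        ((ν-τ)*((ν-τ)-1) * (τ*(τ-1)) * c4)
     - (1/(ν*((ν-τ)-1)*(ν*(ν-1)))) *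
        ((ν-τ)*((ν-τ)-1) * (2*c2 + 4*((ν-τ)-2)*c3 + ((ν-τ)-2)*((ν-τ)-3)*c4)))
      = (2*τ-ν) * (2*c2 + 4*(ν-2)*c3 + (ν-2)*(ν-3)*c4) / (ν*ν*(ν-1)) := by
    field_simp
    ring
  have hY : ((1/(ν*(τ-1))) * (τ*(τ-1)*c1a) + (1/(ν*((ν-τ)-1))) * ((ν-τ)*((ν-τ)-1)*c1a))
      = c1a := by
    field_simp
    ring
  have hZ : ((1/(ν*(ν-1))) * (τ*(τ-1)*c1b) - (1/(ν*(ν-1))) * ((ν-τ)*((ν-τ)-1)*c1b))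
      = (2*τ-ν)*c1b/ν := by
    field_simp
    ring
  have hcc : M * (2*c2 + 4*(ν-2)*c3 + (ν-2)*(ν-3)*c4) = ν*(ν-1)*(c1a*c1b) := by
    refine mul_left_cancel₀ (mul_ne_zero hn0 hn1) ?_
    linear_combination R
  rw [hX, hY, hZ, sub_eq_zero, div_div, div_div, div_mul_div_comm, div_eq_div_iff
    (by exact mul_ne_zero (mul_ne_zero (mul_ne_zero hn0 hn0) hn1) hM)
    (by exact mul_ne_zero hM (mul_ne_zero hn0 hM))]
  linear_combination (2*τ - ν) * ν * M * hcc


set_option maxHeartbeats 1600000 in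
theorem cov_W1_D2_zero (n t : ℕ) (ht : 4 ≤ t) (htn : t + 4 ≤ n)
    (K₁ K₂ : Fin n → Fin n → ℝ)
    (hsymm₁ : ∀ i j, K₁ i j = K₁ j i) (hdiag₁ : ∀ i, K₁ i i = 0)
    (hsymm₂ : ∀ i j, K₂ i j = K₂ j i) (hdiag₂ : ∀ i, K₂ i i = 0) :
    permExp n (fun π => Wstat n t K₁ π * Dstat n t K₂ π)
      - permExp n (Wstat n t K₁) * permExp n (Dstat n t K₂) = 0 := by
  classical
  have htn' : t ≤ n := by omega
  have hs₁ : ∀ a b, K₁ a b = K₁ b a := hsymm₁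
  have hs₂ : ∀ a b, K₂ a b = K₂ b a := hsymm₂
  -- canonical reference points
  have h0n : 0 < n := by omega
  have h1n : 1 < n := by omega
  have h2n : 2 < n := by omega
  have h3n : 3 < n := by omega
  set y0 : Fin n := ⟨0, h0n⟩ with hy0
  set y1 : Fin n := ⟨1, h1n⟩ with hy1
  set y2 : Fin n := ⟨2, h2n⟩ with hy2
  set y3 : Fin n := ⟨3, h3n⟩ with hy3
  have h01 : y0 ≠ y1 := by simp [hy0, hy1, Fin.ext_iff]
  have h02 : y0 ≠ y2 := by simp [hy0, hy2, Fin.ext_iff]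
  have h03 : y0 ≠ y3 := by simp [hy0, hy3, Fin.ext_iff]
  have h12 : y1 ≠ y2 := by simp [hy1, hy2, Fin.ext_iff]
  have h13 : y1 ≠ y3 := by simp [hy1, hy3, Fin.ext_iff]
  have h23 : y2 ≠ y3 := by simp [hy2, hy3, Fin.ext_iff]
  -- sets
  set A : Finset (Fin n) := Finset.univ.filter (fun i : Fin n => (i : ℕ) < t) with hA
  set B : Finset (Fin n) := Finset.univ.filter (fun i : Fin n => t ≤ (i : ℕ)) with hB
  have hAcast : ((A.card : ℝ)) = (t : ℝ) := by rw [hA, CovAux.cardA htn']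
  have hBcast : ((B.card : ℝ)) = (n : ℝ) - (t : ℝ) := by
    rw [hB, CovAux.cardB htn', Nat.cast_sub htn']
  have hUcast : (((Finset.univ : Finset (Fin n)).card : ℝ)) = (n : ℝ) := by
    rw [Finset.card_univ, Fintype.card_fin]
  have hdisj : Disjoint A B := by rw [hA, hB]; exact CovAux.disjAB t
  have hdisj' : Disjoint B A := hdisj.symm
  -- numeric nonvanishing
  have hτ4 : (4 : ℝ) ≤ (t : ℝ) := by exact_mod_cast ht
  have hν8 : (t : ℝ) + 4 ≤ (n : ℝ) := by exact_mod_cast htn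
  have ht0 : (t : ℝ) ≠ 0 := by positivity
  have ht1 : (t : ℝ) - 1 ≠ 0 := by nlinarith
  have hn0 : (n : ℝ) ≠ 0 := by positivity
  have hn1 : (n : ℝ) - 1 ≠ 0 := by nlinarith
  have hss0 : (n : ℝ) - (t : ℝ) ≠ 0 := by nlinarith
  have hss1 : (n : ℝ) - (t : ℝ) - 1 ≠ 0 := by nlinarith
  have hM : ((Fintype.card (Equiv.Perm (Fin n)) : ℝ)) ≠ 0 := by
    exact_mod_cast Fintype.card_ne_zero
  -- pointwise forms of W and D
  have hWp : ∀ π : Equiv.Perm (Fin n), Wstat n t K₁ π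
      = (1/((n:ℝ)*((t:ℝ)-1))) * CovAux.Ssum A K₁ π
        + (1/((n:ℝ)*(((n:ℝ)-(t:ℝ))-1))) * CovAux.Ssum B K₁ π := by
    intro π
    simp only [Wstat, alphaStat, betaStat]
    rw [CovAux.alpha_eq t K₁ hdiag₁ π, CovAux.beta_eq t K₁ hdiag₁ π, ← hA, ← hB]
    field_simp
  have hDp : ∀ π : Equiv.Perm (Fin n), Dstat n t K₂ π
      = (1/((n:ℝ)*((n:ℝ)-1))) * CovAux.Ssum A K₂ π
        - (1/((n:ℝ)*((n:ℝ)-1))) * CovAux.Ssum B K₂ π := by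
    intro π
    simp only [Dstat, alphaStat, betaStat]
    rw [CovAux.alpha_eq t K₂ hdiag₂ π, CovAux.beta_eq t K₂ hdiag₂ π, ← hA, ← hB]
    field_simp
  -- basic sums
  have HA1 : ∑ π : Equiv.Perm (Fin n), CovAux.Ssum A K₁ π
      = (t:ℝ)*((t:ℝ)-1) * CovAux.G1 K₁ y0 y1 := by
    rw [CovAux.swapPerm2, CovAux.pair_sum hdiag₁ h01, hAcast]
  have HB1 : ∑ π : Equiv.Perm (Fin n), CovAux.Ssum B K₁ π
      = ((n:ℝ)-(t:ℝ))*(((n:ℝ)-(t:ℝ))-1) * CovAux.G1 K₁ y0 y1 := by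
    rw [CovAux.swapPerm2, CovAux.pair_sum hdiag₁ h01, hBcast]
  have HA2 : ∑ π : Equiv.Perm (Fin n), CovAux.Ssum A K₂ π
      = (t:ℝ)*((t:ℝ)-1) * CovAux.G1 K₂ y0 y1 := by
    rw [CovAux.swapPerm2, CovAux.pair_sum hdiag₂ h01, hAcast]
  have HB2 : ∑ π : Equiv.Perm (Fin n), CovAux.Ssum B K₂ π
      = ((n:ℝ)-(t:ℝ))*(((n:ℝ)-(t:ℝ))-1) * CovAux.G1 K₂ y0 y1 := by
    rw [CovAux.swapPerm2, CovAux.pair_sum hdiag₂ h01, hBcast]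
  -- product sums
  have HAA : ∑ π : Equiv.Perm (Fin n), CovAux.Ssum A K₁ π * CovAux.Ssum A K₂ π
      = (t:ℝ)*((t:ℝ)-1) * (2 * CovAux.Gq K₁ K₂ y0 y1 y0 y1
          + 4 * ((t:ℝ)-2) * CovAux.Gq K₁ K₂ y0 y1 y0 y2
          + ((t:ℝ)-2) * ((t:ℝ)-3) * CovAux.Gq K₁ K₂ y0 y1 y2 y3) := by
    rw [CovAux.swapPerm4, CovAux.master_sum hs₁ hdiag₁ hs₂ hdiag₂
      h01 h02 h03 h12 h13 h23 A, hAcast]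
  have HBB : ∑ π : Equiv.Perm (Fin n), CovAux.Ssum B K₁ π * CovAux.Ssum B K₂ π
      = ((n:ℝ)-(t:ℝ))*(((n:ℝ)-(t:ℝ))-1) * (2 * CovAux.Gq K₁ K₂ y0 y1 y0 y1
          + 4 * (((n:ℝ)-(t:ℝ))-2) * CovAux.Gq K₁ K₂ y0 y1 y0 y2
          + (((n:ℝ)-(t:ℝ))-2) * (((n:ℝ)-(t:ℝ))-3) * CovAux.Gq K₁ K₂ y0 y1 y2 y3) := by
    rw [CovAux.swapPerm4, CovAux.master_sum hs₁ hdiag₁ hs₂ hdiag₂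
      h01 h02 h03 h12 h13 h23 B, hBcast]
  have HAB : ∑ π : Equiv.Perm (Fin n), CovAux.Ssum A K₁ π * CovAux.Ssum B K₂ π
      = (t:ℝ)*((t:ℝ)-1) * (((n:ℝ)-(t:ℝ))*(((n:ℝ)-(t:ℝ))-1))
          * CovAux.Gq K₁ K₂ y0 y1 y2 y3 := by
    rw [CovAux.swapPerm4, CovAux.cross_sum hdiag₁ hdiag₂
      h01 h02 h03 h12 h13 h23 hdisj, hAcast, hBcast]
  have HBA : ∑ π : Equiv.Perm (Fin n), CovAux.Ssum B K₁ π * CovAux.Ssum A K₂ π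
      = ((n:ℝ)-(t:ℝ))*(((n:ℝ)-(t:ℝ))-1) * ((t:ℝ)*((t:ℝ)-1))
          * CovAux.Gq K₁ K₂ y0 y1 y2 y3 := by
    rw [CovAux.swapPerm4, CovAux.cross_sum hdiag₁ hdiag₂
      h01 h02 h03 h12 h13 h23 hdisj', hBcast, hAcast]
  -- the key relation R
  have hU1 : ∑ π : Equiv.Perm (Fin n), CovAux.Ssum Finset.univ K₁ π
      = (n:ℝ)*((n:ℝ)-1) * CovAux.G1 K₁ y0 y1 := by
    rw [CovAux.swapPerm2, CovAux.pair_sum hdiag₁ h01, hUcast]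
  have hU2 : ∑ π : Equiv.Perm (Fin n), CovAux.Ssum Finset.univ K₂ π
      = (n:ℝ)*((n:ℝ)-1) * CovAux.G1 K₂ y0 y1 := by
    rw [CovAux.swapPerm2, CovAux.pair_sum hdiag₂ h01, hUcast]
  have hUU : ∑ π : Equiv.Perm (Fin n), CovAux.Ssum Finset.univ K₁ π * CovAux.Ssum Finset.univ K₂ π
      = (n:ℝ)*((n:ℝ)-1) * (2 * CovAux.Gq K₁ K₂ y0 y1 y0 y1
          + 4 * ((n:ℝ)-2) * CovAux.Gq K₁ K₂ y0 y1 y0 y2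
          + ((n:ℝ)-2) * ((n:ℝ)-3) * CovAux.Gq K₁ K₂ y0 y1 y2 y3) := by
    rw [CovAux.swapPerm4, CovAux.master_sum hs₁ hdiag₁ hs₂ hdiag₂
      h01 h02 h03 h12 h13 h23 Finset.univ, hUcast]
  have hUc1 : ∑ π : Equiv.Perm (Fin n), CovAux.Ssum Finset.univ K₁ π
      = (Fintype.card (Equiv.Perm (Fin n)) : ℝ) * (∑ a : Fin n, ∑ b : Fin n, K₁ a b) := by
    rw [Finset.sum_congr rfl fun π _ => CovAux.Ssum_univ_const K₁ π, Finset.sum_const,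
      Finset.card_univ, nsmul_eq_mul]
  have hUc2 : ∑ π : Equiv.Perm (Fin n), CovAux.Ssum Finset.univ K₂ π
      = (Fintype.card (Equiv.Perm (Fin n)) : ℝ) * (∑ a : Fin n, ∑ b : Fin n, K₂ a b) := by
    rw [Finset.sum_congr rfl fun π _ => CovAux.Ssum_univ_const K₂ π, Finset.sum_const,
      Finset.card_univ, nsmul_eq_mul]
  have hUcc : ∑ π : Equiv.Perm (Fin n), CovAux.Ssum Finset.univ K₁ π * CovAux.Ssum Finset.univ K₂ π
      = (Fintype.card (Equiv.Perm (Fin n)) : ℝ)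
          * ((∑ a : Fin n, ∑ b : Fin n, K₁ a b) * (∑ a : Fin n, ∑ b : Fin n, K₂ a b)) := by
    rw [Finset.sum_congr rfl fun π _ => by
      rw [CovAux.Ssum_univ_const K₁ π, CovAux.Ssum_univ_const K₂ π], Finset.sum_const,
      Finset.card_univ, nsmul_eq_mul]
  have R : (Fintype.card (Equiv.Perm (Fin n)) : ℝ)
        * ((n:ℝ) * ((n:ℝ) - 1) * (2 * CovAux.Gq K₁ K₂ y0 y1 y0 y1
            + 4 * ((n:ℝ)-2) * CovAux.Gq K₁ K₂ y0 y1 y0 y2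
            + ((n:ℝ)-2) * ((n:ℝ)-3) * CovAux.Gq K₁ K₂ y0 y1 y2 y3))
      = (n:ℝ)*((n:ℝ)-1)*CovAux.G1 K₁ y0 y1 * ((n:ℝ)*((n:ℝ)-1)*CovAux.G1 K₂ y0 y1) := by
    have e1 : (Fintype.card (Equiv.Perm (Fin n)) : ℝ) * (∑ a : Fin n, ∑ b : Fin n, K₁ a b)
        = (n:ℝ)*((n:ℝ)-1) * CovAux.G1 K₁ y0 y1 := by rw [← hUc1, hU1]
    have e2 : (Fintype.card (Equiv.Perm (Fin n)) : ℝ) * (∑ a : Fin n, ∑ b : Fin n, K₂ a b)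
        = (n:ℝ)*((n:ℝ)-1) * CovAux.G1 K₂ y0 y1 := by rw [← hUc2, hU2]
    have e3 : (Fintype.card (Equiv.Perm (Fin n)) : ℝ)
          * ((∑ a : Fin n, ∑ b : Fin n, K₁ a b) * (∑ a : Fin n, ∑ b : Fin n, K₂ a b))
        = (n:ℝ)*((n:ℝ)-1) * (2 * CovAux.Gq K₁ K₂ y0 y1 y0 y1
            + 4 * ((n:ℝ)-2) * CovAux.Gq K₁ K₂ y0 y1 y0 y2
            + ((n:ℝ)-2) * ((n:ℝ)-3) * CovAux.Gq K₁ K₂ y0 y1 y2 y3) := by rw [← hUcc, hUU]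
    calc (Fintype.card (Equiv.Perm (Fin n)) : ℝ)
          * ((n:ℝ) * ((n:ℝ) - 1) * (2 * CovAux.Gq K₁ K₂ y0 y1 y0 y1
            + 4 * ((n:ℝ)-2) * CovAux.Gq K₁ K₂ y0 y1 y0 y2
            + ((n:ℝ)-2) * ((n:ℝ)-3) * CovAux.Gq K₁ K₂ y0 y1 y2 y3))
        = (Fintype.card (Equiv.Perm (Fin n)) : ℝ) * ((Fintype.card (Equiv.Perm (Fin n)) : ℝ)
            * ((∑ a : Fin n, ∑ b : Fin n, K₁ a b) * (∑ a : Fin n, ∑ b : Fin n, K₂ a b))) := by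
          rw [e3]
      _ = ((Fintype.card (Equiv.Perm (Fin n)) : ℝ) * (∑ a : Fin n, ∑ b : Fin n, K₁ a b))
            * ((Fintype.card (Equiv.Perm (Fin n)) : ℝ) * (∑ a : Fin n, ∑ b : Fin n, K₂ a b)) := by
          ring
      _ = (n:ℝ)*((n:ℝ)-1)*CovAux.G1 K₁ y0 y1 * ((n:ℝ)*((n:ℝ)-1)*CovAux.G1 K₂ y0 y1) := by
          rw [e1, e2]
  -- assemble the three permutation sums
  have hpoint : ∀ π : Equiv.Perm (Fin n), Wstat n t K₁ π * Dstat n t K₂ π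
      = (1/((n:ℝ)*((t:ℝ)-1)*((n:ℝ)*((n:ℝ)-1)))) * (CovAux.Ssum A K₁ π * CovAux.Ssum A K₂ π)
        - (1/((n:ℝ)*((t:ℝ)-1)*((n:ℝ)*((n:ℝ)-1)))) * (CovAux.Ssum A K₁ π * CovAux.Ssum B K₂ π)
        + (1/((n:ℝ)*(((n:ℝ)-(t:ℝ))-1)*((n:ℝ)*((n:ℝ)-1)))) * (CovAux.Ssum B K₁ π * CovAux.Ssum A K₂ π)
        - (1/((n:ℝ)*(((n:ℝ)-(t:ℝ))-1)*((n:ℝ)*((n:ℝ)-1)))) * (CovAux.Ssum B K₁ π * CovAux.Ssum B K₂ π) := by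
    intro π
    rw [hWp π, hDp π]
    simp only [one_div, mul_inv]
    ring
  have hsum1 : ∑ π : Equiv.Perm (Fin n), Wstat n t K₁ π * Dstat n t K₂ π
      = (1/((n:ℝ)*((t:ℝ)-1)*((n:ℝ)*((n:ℝ)-1)))) *
          ((t:ℝ)*((t:ℝ)-1) * (2 * CovAux.Gq K₁ K₂ y0 y1 y0 y1
            + 4 * ((t:ℝ)-2) * CovAux.Gq K₁ K₂ y0 y1 y0 y2
            + ((t:ℝ)-2) * ((t:ℝ)-3) * CovAux.Gq K₁ K₂ y0 y1 y2 y3))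
        - (1/((n:ℝ)*((t:ℝ)-1)*((n:ℝ)*((n:ℝ)-1)))) *
          ((t:ℝ)*((t:ℝ)-1) * (((n:ℝ)-(t:ℝ))*(((n:ℝ)-(t:ℝ))-1)) * CovAux.Gq K₁ K₂ y0 y1 y2 y3)
        + (1/((n:ℝ)*(((n:ℝ)-(t:ℝ))-1)*((n:ℝ)*((n:ℝ)-1)))) *
          (((n:ℝ)-(t:ℝ))*(((n:ℝ)-(t:ℝ))-1) * ((t:ℝ)*((t:ℝ)-1)) * CovAux.Gq K₁ K₂ y0 y1 y2 y3)
        - (1/((n:ℝ)*(((n:ℝ)-(t:ℝ))-1)*((n:ℝ)*((n:ℝ)-1)))) *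
          (((n:ℝ)-(t:ℝ))*(((n:ℝ)-(t:ℝ))-1) * (2 * CovAux.Gq K₁ K₂ y0 y1 y0 y1
            + 4 * (((n:ℝ)-(t:ℝ))-2) * CovAux.Gq K₁ K₂ y0 y1 y0 y2
            + (((n:ℝ)-(t:ℝ))-2) * (((n:ℝ)-(t:ℝ))-3) * CovAux.Gq K₁ K₂ y0 y1 y2 y3)) := by
    rw [Finset.sum_congr rfl fun π _ => hpoint π]
    simp only [Finset.sum_sub_distrib, Finset.sum_add_distrib, ← Finset.mul_sum]
    rw [HAA, HAB, HBA, HBB]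
  have hsum2 : ∑ π : Equiv.Perm (Fin n), Wstat n t K₁ π
      = (1/((n:ℝ)*((t:ℝ)-1))) * ((t:ℝ)*((t:ℝ)-1)*CovAux.G1 K₁ y0 y1)
        + (1/((n:ℝ)*(((n:ℝ)-(t:ℝ))-1))) *
            (((n:ℝ)-(t:ℝ))*(((n:ℝ)-(t:ℝ))-1)*CovAux.G1 K₁ y0 y1) := by
    rw [Finset.sum_congr rfl fun π _ => hWp π]
    simp only [Finset.sum_add_distrib, ← Finset.mul_sum]
    rw [HA1, HB1]
  have hsum3 : ∑ π : Equiv.Perm (Fin n), Dstat n t K₂ π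
      = (1/((n:ℝ)*((n:ℝ)-1))) * ((t:ℝ)*((t:ℝ)-1)*CovAux.G1 K₂ y0 y1)
        - (1/((n:ℝ)*((n:ℝ)-1))) *
            (((n:ℝ)-(t:ℝ))*(((n:ℝ)-(t:ℝ))-1)*CovAux.G1 K₂ y0 y1) := by
    rw [Finset.sum_congr rfl fun π _ => hDp π]
    simp only [Finset.sum_sub_distrib, ← Finset.mul_sum]
    rw [HA2, HB2]
  simp only [permExp]
  rw [hsum1, hsum2, hsum3]
  exact final_alg (Fintype.card (Equiv.Perm (Fin n)) : ℝ) (t : ℝ) (n : ℝ)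
    (CovAux.G1 K₁ y0 y1) (CovAux.G1 K₂ y0 y1) (CovAux.Gq K₁ K₂ y0 y1 y0 y1)
    (CovAux.Gq K₁ K₂ y0 y1 y0 y2) (CovAux.Gq K₁ K₂ y0 y1 y2 y3)
    hM ht0 ht1 hn0 hn1 hss0 hss1 R
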